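/- Fix two voters N = {1, 2}, a path-connected domain D and a strategy-proof rule f : D^2 → A. Let Ā, Â ⊆ A with |Ā| > 1 and |Â| > 1 be such that the subgraphs of the adjacency graph G_∼ induced on Ā and on Â are connected, and let π = (x_1, …, x_v) be a path in G_∼ with x_1 ∈ Ā and x_v ∈ Â. If f behaves like a dictatorship on Ā and f behaves like a dictatorship on Â, then f behaves like a dictatorship on Ā ∪ {x_1, …, x_v} ∪ Â. -/

import Mathlib

open Classical

set_option linter.unusedSectionVars false
set_option linter.unusedVariables false

/-- A strict preference over `A`, represented as a ranking bijection:
`P k` is the `(k+1)`-th ranked alternative. -/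
abbrev Pref (A : Type*) [Fintype A] := Fin (Fintype.card A) ≃ A

variable {A : Type*} [Fintype A] [DecidableEq A] [Nonempty A]

/-- `rk P k` : the `(k+1)`-th ranked alternative of `P` (0-indexed, so `rk P 0 = r₁(P)`). -/
noncomputable def rk (P : Pref A) (k : ℕ) : A :=
  if h : k < Fintype.card A then P ⟨k, h⟩ else Classical.arbitrary A

/-- The peak `r₁(P)`. -/
noncomputable def peak (P : Pref A) : A := rk P 0

/-- The second-ranked alternative `r₂(P)`. -/
noncomputable def second (P : Pref A) : A := rk P 1

/-- `a` is strictly preferred to `b` under `P`. -/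
def prefers (P : Pref A) (a b : A) : Prop := P.symm a < P.symm b

/-- Two preferences are completely reversed. -/
def Reversed (P P' : Pref A) : Prop := ∀ a b : A, prefers P a b ↔ prefers P' b a

/-- A profile lies in the domain `D`. -/
def InDom (D : Set (Pref A)) {n : ℕ} (P : Fin n → Pref A) : Prop := ∀ i, P i ∈ D

/-- Unanimity (an SCF satisfying it is called a rule). -/
def IsRule (D : Set (Pref A)) {n : ℕ} (f : (Fin n → Pref A) → A) : Prop :=
  ∀ P : Fin n → Pref A, InDom D P → ∀ a : A, (∀ i, peak (P i) = a) → f P = a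

/-- Strategy-proofness (relative to the domain `D`). -/
def StrategyProof (D : Set (Pref A)) {n : ℕ} (f : (Fin n → Pref A) → A) : Prop :=
  ∀ P : Fin n → Pref A, InDom D P → ∀ i : Fin n, ∀ Q ∈ D,
    f P = f (Function.update P i Q) ∨ prefers (P i) (f P) (f (Function.update P i Q))

/-- The tops-only property. -/
def TopsOnly (D : Set (Pref A)) {n : ℕ} (f : (Fin n → Pref A) → A) : Prop :=
  ∀ P P' : Fin n → Pref A, InDom D P → InDom D P' →
    (∀ i, peak (P i) = peak (P' i)) → f P = f P'

/-- Anonymity. -/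
def Anonymous (D : Set (Pref A)) {n : ℕ} (f : (Fin n → Pref A) → A) : Prop :=
  ∀ P : Fin n → Pref A, InDom D P → ∀ σ : Equiv.Perm (Fin n), f (P ∘ σ) = f P

/-- `f` behaves like a dictatorship on `B`. -/
def DictatorOn (D : Set (Pref A)) {n : ℕ} (f : (Fin n → Pref A) → A) (B : Set A) : Prop :=
  ∃ i : Fin n, ∀ P : Fin n → Pref A, InDom D P → (∀ j, peak (P j) ∈ B) → f P = peak (P i)

/-- `f` is a dictatorship. -/
def Dictatorship (D : Set (Pref A)) {n : ℕ} (f : (Fin n → Pref A) → A) : Prop :=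
  DictatorOn D f Set.univ

/-- A dictatorial domain. -/
def DictatorialDomain (D : Set (Pref A)) : Prop :=
  ∀ n : ℕ, 2 ≤ n → ∀ f : (Fin n → Pref A) → A,
    IsRule D f → StrategyProof D f → Dictatorship D f

/-- A tops-only domain. -/
def TopsOnlyDomain (D : Set (Pref A)) : Prop :=
  ∀ n : ℕ, 2 ≤ n → ∀ f : (Fin n → Pref A) → A,
    IsRule D f → StrategyProof D f → TopsOnly D f

/-- Adjacency of two alternatives relative to the domain `D`. -/
def DomAdjacent (D : Set (Pref A)) (a b : A) : Prop :=
  ∃ P ∈ D, ∃ P' ∈ D, peak P = a ∧ second P = b ∧ peak P' = b ∧ second P' = a ∧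
    ∀ k : ℕ, 2 ≤ k → rk P k = rk P' k

/-- The adjacency graph `G_∼` of the domain `D`. -/
noncomputable def adjGraph (D : Set (Pref A)) : SimpleGraph A :=
  SimpleGraph.fromRel (DomAdjacent D)

/-- Path-connectedness of the domain. -/
def PathConnectedDom (D : Set (Pref A)) : Prop := (adjGraph D).Connected

/-- Diversity: the domain contains two completely reversed preferences. -/
def Diversity (D : Set (Pref A)) : Prop := ∃ P ∈ D, ∃ P' ∈ D, Reversed P P'

/-- `S(D^a)`: the set of alternatives second-ranked in some preference of `D` with peak `a`. -/
def secondsSet (D : Set (Pref A)) (a : A) : Set A := {b | ∃ P ∈ D, peak P = a ∧ second P = b}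

/-- Leaf symmetry. -/
def LeafSymmetry (D : Set (Pref A)) : Prop :=
  ∀ x : A, (∃! y, (adjGraph D).Adj x y) →
    (∃ u ∈ secondsSet D x, ∃ v ∈ secondsSet D x, u ≠ v) →
    ∃ z ∈ secondsSet D x, ¬ (adjGraph D).Adj x z ∧ x ∈ secondsSet D z

/-- Unidimensionality: path-connectedness, diversity and leaf symmetry. -/
def Unidimensional (D : Set (Pref A)) : Prop :=
  PathConnectedDom D ∧ Diversity D ∧ LeafSymmetry D

/-- The unique seconds property. -/
def UniqueSeconds (D : Set (Pref A)) : Prop := ∃ x b : A, secondsSet D x = {b}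

/-- Minimal richness. -/
def MinimallyRich (D : Set (Pref A)) : Prop := ∀ a : A, ∃ P ∈ D, peak P = a

/-- The vertex set `⟨x, y|T⟩` of the (in a tree, unique) shortest path between `x` and `y`. -/
def intv (T : SimpleGraph A) (x y : A) : Set A :=
  {z | T.dist x z + T.dist z y = T.dist x y}

/-- `a'` is the projection of `a` onto `B` in `T`. -/
def IsProjPt (T : SimpleGraph A) (B : Set A) (a a' : A) : Prop :=
  a' ∈ B ∧ ∀ b ∈ B, a' ∈ intv T a b

/-- The projection `Proj(a, B)` of `a` onto a path-closed set `B` in the tree `T`. -/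
noncomputable def projOn (T : SimpleGraph A) (B : Set A) (a : A) : A :=
  if h : ∃ a', IsProjPt T B a a' then h.choose else a

/-- `Γ(P)`: the vertex set of the minimal subtree of `T` spanning all the peaks. -/
def gammaSet (T : SimpleGraph A) {n : ℕ} (P : Fin n → Pref A) : Set A :=
  {c | ∃ i j : Fin n, c ∈ intv T (peak (P i)) (peak (P j))}

/-- The projection rule on `T` w.r.t. `xbar`. -/
noncomputable def projRule (T : SimpleGraph A) (xbar : A) {n : ℕ}
    (P : Fin n → Pref A) : A :=
  projOn T (gammaSet T P) xbar

/-- Single-peakedness on a tree. -/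
def SinglePeaked (T : SimpleGraph A) (P : Pref A) : Prop :=
  ∀ c d : A, c ≠ d → c ∈ intv T (peak P) d → prefers P c d

/-- Semi-single-peakedness on `T` w.r.t. the threshold `xbar`. -/
def SemiSP (T : SimpleGraph A) (xbar : A) (P : Pref A) : Prop :=
  (∀ c d : A, c ∈ intv T (peak P) xbar → d ∈ intv T (peak P) xbar → c ≠ d →
    c ∈ intv T (peak P) d → prefers P c d) ∧
  (∀ c : A, c ∉ intv T (peak P) xbar →
    prefers P (projOn T (intv T (peak P) xbar) c) c)

/-- A semi-single-peaked domain. -/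
def SemiSPDomain (D : Set (Pref A)) : Prop :=
  ∃ (T : SimpleGraph A) (xbar : A), T.IsTree ∧
    D ⊆ {P | SemiSP T xbar P} ∧ (adjGraph D).Connected

/-- `A^{a⇀b}`: the alternatives whose path to `b` goes through `a`. -/
def sideSet (T : SimpleGraph A) (a b : A) : Set A := {z | a ∈ intv T z b}

/-- `x = max^P(B)`: `x` is `P`'s best alternative of `B`. -/
def IsBestOf (P : Pref A) (x : A) (B : Set A) : Prop :=
  x ∈ B ∧ ∀ y ∈ B, y ≠ x → prefers P x y

/-- `a` and `b` are dual-thresholds in the tree `T`. -/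
def DualThresholds (T : SimpleGraph A) (a b : A) : Prop :=
  a ≠ b ∧ ∀ c : A, c ∉ intv T a b →
    projOn T (intv T a b) c = a ∨ projOn T (intv T a b) c = b

/-- An `(a,b)`-semi-hybrid preference on `T`. -/
def SemiHybridPref (T : SimpleGraph A) (a b : A) (P : Pref A) : Prop :=
  (peak P ∈ sideSet T a b \ {a} → SemiSP T a P ∧ IsBestOf P b (sideSet T b a)) ∧
  (peak P ∈ sideSet T b a \ {b} → SemiSP T b P ∧ IsBestOf P a (sideSet T a b)) ∧
  (peak P ∈ intv T a b → IsBestOf P a (sideSet T a b) ∧ IsBestOf P b (sideSet T b a))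

/-- `x` is a leaf of the subgraph of `G` induced on `B`. -/
def IsLeafOn (G : SimpleGraph A) (B : Set A) (x : A) : Prop :=
  x ∈ B ∧ ∃! y, y ∈ B ∧ G.Adj x y

/-- `D` is an `(a,b)`-semi-hybrid domain on the tree `T`. -/
def SemiHybridDomainOn (D : Set (Pref A)) (T : SimpleGraph A) (a b : A) : Prop :=
  T.IsTree ∧ DualThresholds T a b ∧ D ⊆ {P | SemiHybridPref T a b P} ∧
  (adjGraph D).Connected ∧
  (¬ ∃ (T' : SimpleGraph A) (a' b' : A), T'.IsTree ∧ DualThresholds T' a' b' ∧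
      D ⊆ {P | SemiHybridPref T' a' b' P} ∧ intv T' a' b' ⊂ intv T a b) ∧
  ((adjGraph D).IsTree →
    ∀ x : A, IsLeafOn (adjGraph D) (intv T a b) x →
      ∃ P ∈ D, ¬ SemiSP (adjGraph D) x P)

/-- `D` is a semi-hybrid domain. -/
def SemiHybridDomain (D : Set (Pref A)) : Prop :=
  ∃ (T : SimpleGraph A) (a b : A), SemiHybridDomainOn D T a b

/-- An `(a,b)`-hybrid preference on `T`. -/
def HybridPref (T : SimpleGraph A) (a b : A) (P : Pref A) : Prop :=
  (∀ y z : A, ((y ∈ sideSet T a b ∧ z ∈ sideSet T a b) ∨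
      (y ∈ sideSet T b a ∧ z ∈ sideSet T b a)) → y ≠ z →
    y ∈ intv T (peak P) z → prefers P y z) ∧
  (peak P ∈ sideSet T a b \ {a} → IsBestOf P a (intv T a b)) ∧
  (peak P ∈ sideSet T b a \ {b} → IsBestOf P b (intv T a b))

/-- `D` is an `(a,b)`-hybrid domain on the tree `T`. -/
def HybridDomainOn (D : Set (Pref A)) (T : SimpleGraph A) (a b : A) : Prop :=
  T.IsTree ∧ DualThresholds T a b ∧ D ⊆ {P | HybridPref T a b P} ∧
  (adjGraph D).Connected ∧
  (¬ ∃ (T' : SimpleGraph A) (a' b' : A), T'.IsTree ∧ DualThresholds T' a' b' ∧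
      D ⊆ {P | HybridPref T' a' b' P} ∧ intv T' a' b' ⊂ intv T a b) ∧
  3 ≤ (intv T a b).ncard

/-- `f` is an `(a,b)`-hybrid rule on the tree `T`. -/
def IsHybridRule (D : Set (Pref A)) {n : ℕ} (f : (Fin n → Pref A) → A)
    (T : SimpleGraph A) (a b : A) : Prop :=
  T.IsTree ∧ DualThresholds T a b ∧ 3 ≤ (intv T a b).ncard ∧
  ∃ i : Fin n, ∀ P : Fin n → Pref A, InDom D P →
    (peak (P i) ∈ intv T a b → f P = peak (P i)) ∧
    (peak (P i) ∈ sideSet T a b \ {a} → f P = projOn T (gammaSet T P) a) ∧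
    (peak (P i) ∈ sideSet T b a \ {b} → f P = projOn T (gammaSet T P) b)

/-- The PNT rule on `T` w.r.t. the edge `(x, y)`, with the two distinguished voters `i, j`. -/
noncomputable def pntRule (T : SimpleGraph A) (x y : A) {n : ℕ} (i j : Fin n)
    (P : Fin n → Pref A) : A :=
  if peak (P i) ∈ sideSet T y x then peak (P i)
  else if peak (P j) ∈ sideSet T x y then projOn T (gammaSet T P) x
  else if prefers (P j) x y then x else y

/-- `(x, y)` is a critical spot in `T` for the domain `D`. -/
def CriticalSpot (D : Set (Pref A)) (T : SimpleGraph A) (x y : A) : Prop :=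
  T.Adj x y ∧
  (∀ P ∈ D, peak P ∈ sideSet T x y → SemiSP T y P) ∧
  (∀ P ∈ D, peak P ∈ sideSet T y x → IsBestOf P x (sideSet T x y)) ∧
  (∃ P ∈ D, ∃ P' ∈ D, peak P = peak P' ∧ peak P ∈ sideSet T y x ∧
    prefers P y x ∧ prefers P' x y)

/-- `x` is a path in the graph `G` (pairwise distinct, consecutive vertices adjacent). -/
def IsPathIn (G : SimpleGraph A) {v : ℕ} (x : Fin v → A) : Prop :=
  Function.Injective x ∧
  ∀ (k : ℕ) (h : k + 1 < v), G.Adj (x ⟨k, Nat.lt_of_succ_lt h⟩) (x ⟨k + 1, h⟩)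

/-- `x` is a cycle in the graph `G`. -/
def IsCycleIn (G : SimpleGraph A) {v : ℕ} (x : Fin v → A) : Prop :=
  Function.Injective x ∧
  (∀ (k : ℕ) (h : k + 1 < v), G.Adj (x ⟨k, Nat.lt_of_succ_lt h⟩) (x ⟨k + 1, h⟩)) ∧
  ∀ (h : 0 < v), G.Adj (x ⟨v - 1, Nat.sub_lt h Nat.one_pos⟩) (x ⟨0, h⟩)

/-- The line `L^A` induced by the ranking of the preference `P`. -/
noncomputable def lineOf (P : Pref A) : SimpleGraph A :=
  SimpleGraph.fromRel (fun a b =>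
    ∃ k : ℕ, k + 1 < Fintype.card A ∧ rk P k = a ∧ rk P (k + 1) = b)

/-- The median of three natural numbers. -/
def med3 (a b c : ℕ) : ℕ := max (min a b) (min (max a b) c)

/-- The two-voter profile in which voter `i` reports `Pi` and the other voter reports `Q`. -/
noncomputable def prof2 (i : Fin 2) (Pi Q : Pref A) : Fin 2 → Pref A :=
  Function.update (fun _ => Q) i Pi

-- ============ new material ============

instance instNonemptyPref : Nonempty (Pref A) := ⟨(Fintype.equivFin A).symm⟩

section Basics


lemma card_pos : 0 < Fintype.card A := Fintype.card_pos

lemma rk_eq (P : Pref A) (k : ℕ) (h : k < Fintype.card A) : rk P k = P ⟨k, h⟩ := dif_pos h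

lemma symm_rank_lt (P : Pref A) (a : A) (k : ℕ) (h : k < Fintype.card A)
    (hr : rk P k = a) : P.symm a = ⟨k, h⟩ := by
  rw [rk_eq P k h] at hr
  rw [← hr, Equiv.symm_apply_apply]

lemma peak_rank (P : Pref A) : P.symm (peak P) = ⟨0, card_pos⟩ :=
  symm_rank_lt P _ 0 card_pos rfl

lemma second_rank (P : Pref A) (h1 : 1 < Fintype.card A) :
    P.symm (second P) = ⟨1, h1⟩ := symm_rank_lt P _ 1 h1 rfl

lemma prefers_iff (P : Pref A) (a b : A) :
    prefers P a b ↔ (P.symm a : ℕ) < (P.symm b : ℕ) := Iff.rfl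

lemma prefers_asymm {P : Pref A} {a b : A} (h : prefers P a b) : ¬ prefers P b a := by
  rw [prefers_iff] at *; omega

lemma prefers_total (P : Pref A) {a b : A} (h : a ≠ b) :
    prefers P a b ∨ prefers P b a := by
  rw [prefers_iff, prefers_iff]
  have : P.symm a ≠ P.symm b := fun hc => h (by
    have := congrArg P hc; simpa using this)
  have : (P.symm a : ℕ) ≠ (P.symm b : ℕ) := fun hc => this (Fin.ext hc)
  omega

lemma eq_peak_of_rank_zero {P : Pref A} {a : A} (h : (P.symm a : ℕ) = 0) : a = peak P := by
  have : P.symm a = P.symm (peak P) := by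
    rw [peak_rank]; exact Fin.ext (by simpa using h)
  have := congrArg P this; simpa using this

lemma eq_second_of_rank_one (hcard : 3 ≤ Fintype.card A) {P : Pref A} {a : A} (h : (P.symm a : ℕ) = 1) : a = second P := by
  have h1 : 1 < Fintype.card A := lt_of_lt_of_le (by norm_num) hcard
  have : P.symm a = P.symm (second P) := by
    rw [second_rank P h1]; exact Fin.ext (by simpa using h)
  have := congrArg P this; simpa using this

lemma peak_prefers (P : Pref A) {a : A} (h : a ≠ peak P) : prefers P (peak P) a := by
  rw [prefers_iff, peak_rank]
  simp only [Fin.val_mk]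
  have : (P.symm a : ℕ) ≠ 0 := fun hc => h (eq_peak_of_rank_zero hc)
  omega

lemma not_prefers_peak (P : Pref A) (a : A) : ¬ prefers P a (peak P) := by
  rw [prefers_iff, peak_rank]; simp

lemma second_prefers (hcard : 3 ≤ Fintype.card A) (P : Pref A) {a : A} (hp : a ≠ peak P) (hs : a ≠ second P) :
    prefers P (second P) a := by
  have h1 : 1 < Fintype.card A := lt_of_lt_of_le (by norm_num) hcard
  rw [prefers_iff, second_rank P h1]
  simp only [Fin.val_mk]
  have h0 : (P.symm a : ℕ) ≠ 0 := fun hc => hp (eq_peak_of_rank_zero hc)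
  have h1' : (P.symm a : ℕ) ≠ 1 := fun hc => hs (eq_second_of_rank_one hcard hc)
  omega

lemma peak_ne_second (hcard : 3 ≤ Fintype.card A) (P : Pref A) : peak P ≠ second P := by
  intro h
  have h1 : 1 < Fintype.card A := lt_of_lt_of_le (by norm_num) hcard
  have := peak_rank (A := A) P
  rw [h, second_rank P h1] at this
  exact absurd (congrArg Fin.val this) (by simp)

/-- The key swap lemma at the preference level. -/
lemma swap_core (hcard : 3 ≤ Fintype.card A) {P P' : Pref A} {x y : A}
    (hP1 : peak P = x) (hP2 : second P = y) (hP1' : peak P' = y) (hP2' : second P' = x)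
    (htail : ∀ k, 2 ≤ k → rk P k = rk P' k)
    {a b : A} (hab : prefers P a b) (hba : prefers P' b a) : a = x ∧ b = y := by
  have hxy : x ≠ y := by rw [← hP1, ← hP2]; exact peak_ne_second hcard P
  -- ranks agree off {x, y}
  have key : ∀ c, c ≠ x → c ≠ y → (P.symm c : ℕ) = (P'.symm c : ℕ) := by
    intro c hcx hcy
    have h0 : (P.symm c : ℕ) ≠ 0 := fun hc => hcx (by rw [← hP1]; exact eq_peak_of_rank_zero hc)
    have h1 : (P.symm c : ℕ) ≠ 1 := fun hc => hcy (by rw [← hP2]; exact eq_second_of_rank_one hcard hc)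
    have hk : 2 ≤ (P.symm c : ℕ) := by omega
    have hklt : (P.symm c : ℕ) < Fintype.card A := (P.symm c).isLt
    have hrk : rk P (P.symm c) = c := by
      rw [rk_eq P _ hklt]
      simp
    have hrk' : rk P' (P.symm c) = c := by rw [← htail _ hk]; exact hrk
    have := symm_rank_lt P' c _ hklt hrk'
    rw [this]
  have rx : (P.symm x : ℕ) = 0 := by rw [← hP1, peak_rank]
  have ry : (P.symm y : ℕ) = 1 := by
    rw [← hP2, second_rank P (lt_of_lt_of_le (by norm_num) hcard)]
  have rx' : (P'.symm x : ℕ) = 1 := by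
    rw [← hP2', second_rank P' (lt_of_lt_of_le (by norm_num) hcard)]
  have ry' : (P'.symm y : ℕ) = 0 := by rw [← hP1', peak_rank]
  rw [prefers_iff] at hab hba
  by_cases hax : a = x
  · by_cases hby : b = y
    · exact ⟨hax, hby⟩
    · exfalso
      rw [hax] at hab hba
      by_cases hbx : b = x
      · rw [hbx] at hba; omega
      · have := key b hbx hby
        rw [rx'] at hba
        have h0 : (P'.symm b : ℕ) = 0 := by omega
        exact absurd (by rw [← hP1']; exact eq_peak_of_rank_zero h0) hby
  · exfalso
    by_cases hay : a = y
    · rw [hay] at hba; rw [ry'] at hba; omega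
    · have ha := key a hax hay
      by_cases hbx : b = x
      · rw [hbx, rx] at hab; omega
      · by_cases hby : b = y
        · rw [hby, ry] at hab
          have h0 : (P.symm a : ℕ) = 0 := by omega
          exact hax (by rw [← hP1]; exact eq_peak_of_rank_zero h0)
        · have hb := key b hbx hby
          omega

end Basics

-- ================= two-voter machinery =================

def oth (i : Fin 2) : Fin 2 := if i = 0 then 1 else 0

lemma oth_ne (i : Fin 2) : oth i ≠ i := by fin_cases i <;> decide

lemma oth_oth (i : Fin 2) : oth (oth i) = i := by fin_cases i <;> decide

lemma eq_oth_of_ne {i j : Fin 2} (h : j ≠ i) : j = oth i := by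
  fin_cases i <;> fin_cases j <;> simp_all <;> rfl

@[simp] lemma prof2_self (i : Fin 2) (Pi Q : Pref A) : prof2 i Pi Q i = Pi := by
  simp [prof2]

lemma prof2_apply_ne {i j : Fin 2} (h : j ≠ i) (Pi Q : Pref A) : prof2 i Pi Q j = Q := by
  simp [prof2, Function.update_of_ne h]

lemma prof2_other (i : Fin 2) (Pi Q : Pref A) : prof2 i Pi Q (oth i) = Q :=
  prof2_apply_ne (oth_ne i) Pi Q

lemma prof2_symm (i : Fin 2) (Pi Q : Pref A) : prof2 i Pi Q = prof2 (oth i) Q Pi := by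
  funext j
  by_cases hj : j = i
  · subst hj
    rw [prof2_self, prof2_apply_ne (Ne.symm (oth_ne j))]
  · rw [prof2_apply_ne hj, eq_oth_of_ne hj, prof2_self]

lemma InDom_prof2 {D : Set (Pref A)} {i : Fin 2} {Pi Q : Pref A}
    (h1 : Pi ∈ D) (h2 : Q ∈ D) : InDom D (prof2 i Pi Q) := by
  intro j
  by_cases hj : j = i
  · subst hj; simpa using h1
  · rw [eq_oth_of_ne hj, prof2_other]; exact h2

lemma update_prof2_self (i : Fin 2) (Pi Q R : Pref A) :
    Function.update (prof2 i Pi Q) i R = prof2 i R Q := by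
  simp [prof2, Function.update_idem]

lemma update_prof2_other (i : Fin 2) (Pi Q R : Pref A) :
    Function.update (prof2 i Pi Q) (oth i) R = prof2 i Pi R := by
  funext j
  by_cases hj : j = i
  · subst hj
    rw [Function.update_of_ne (Ne.symm (oth_ne j)), prof2_self, prof2_self]
  · rw [eq_oth_of_ne hj, Function.update_self, prof2_other]

section SCF

variable (D : Set (Pref A)) (f : (Fin 2 → Pref A) → A)

/-- `FF i Pi Pj` : the outcome when voter `i` reports `Pi` and the other voter `Pj`. -/
noncomputable def FF (i : Fin 2) (Pi Pj : Pref A) : A := f (prof2 i Pi Pj)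

variable {D f}

lemma FF_symm (i : Fin 2) (Pi Pj : Pref A) : FF f i Pi Pj = FF f (oth i) Pj Pi := by
  unfold FF; rw [prof2_symm]

/-- Unanimity for two-voter profiles. -/
lemma Unan (hrule : IsRule D f) (i : Fin 2) {Pi Pj : Pref A} (h1 : Pi ∈ D) (h2 : Pj ∈ D)
    (h : peak Pi = peak Pj) : FF f i Pi Pj = peak Pi := by
  apply hrule _ (InDom_prof2 h1 h2)
  intro j
  by_cases hj : j = i
  · subst hj; simp
  · rw [eq_oth_of_ne hj, prof2_other]; exact h.symm

/-- SP for the "column" voter (the other voter). -/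
lemma SP_col (hsp : StrategyProof D f) (i : Fin 2) {Pi Pj Q : Pref A} (h1 : Pi ∈ D) (h2 : Pj ∈ D) (h3 : Q ∈ D) :
    FF f i Pi Pj = FF f i Pi Q ∨ prefers Pj (FF f i Pi Pj) (FF f i Pi Q) := by
  have := hsp (prof2 i Pi Pj) (InDom_prof2 h1 h2) (oth i) Q h3
  rwa [update_prof2_other, prof2_other] at this

/-- SP for the "row" voter (voter `i`). -/
lemma SP_row (hsp : StrategyProof D f) (i : Fin 2) {Pi Pj Q : Pref A} (h1 : Pi ∈ D) (h2 : Pj ∈ D) (h3 : Q ∈ D) :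
    FF f i Pi Pj = FF f i Q Pj ∨ prefers Pi (FF f i Pi Pj) (FF f i Q Pj) := by
  have := hsp (prof2 i Pi Pj) (InDom_prof2 h1 h2) i Q h3
  rwa [update_prof2_self, prof2_self] at this

/-- Fact 2: if voter i can achieve their peak by deviating, they get it truthfully. -/
lemma pull (hsp : StrategyProof D f) (i : Fin 2) {Pi Pj S : Pref A} (h1 : Pi ∈ D) (h2 : Pj ∈ D) (h3 : S ∈ D)
    (h : FF f i S Pj = peak Pi) : FF f i Pi Pj = peak Pi := by
  rcases SP_row hsp i h1 h2 h3 with he | he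
  · rw [he, h]
  · rw [h] at he
    exact absurd he (not_prefers_peak Pi _)

end SCF

-- ================= pairs, chains, regions =================

section Pairs

variable (D : Set (Pref A))

/-- `(P, P')` is an adjacency pair for `(x, y)`. -/
def IsPairP (P P' : Pref A) (x y : A) : Prop :=
  P ∈ D ∧ P' ∈ D ∧ peak P = x ∧ second P = y ∧ peak P' = y ∧ second P' = x ∧
    ∀ k : ℕ, 2 ≤ k → rk P k = rk P' k

variable {D}

lemma IsPairP.symm {P P' : Pref A} {x y : A} (h : IsPairP D P P' x y) :
    IsPairP D P' P y x := by
  obtain ⟨h1, h2, h3, h4, h5, h6, h7⟩ := h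
  exact ⟨h2, h1, h5, h6, h3, h4, fun k hk => (h7 k hk).symm⟩

lemma IsPairP.ne (hcard : 3 ≤ Fintype.card A) {P P' : Pref A} {x y : A}
    (h : IsPairP D P P' x y) : x ≠ y := by
  obtain ⟨_, _, h3, h4, _⟩ := h
  rw [← h3, ← h4]; exact peak_ne_second hcard P

lemma domAdjacent_iff_pair {x y : A} :
    DomAdjacent D x y ↔ ∃ P P', IsPairP D P P' x y := by
  constructor
  · rintro ⟨P, hP, P', hP', h1, h2, h3, h4, h5⟩
    exact ⟨P, P', hP, hP', h1, h2, h3, h4, h5⟩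
  · rintro ⟨P, P', hP, hP', h1, h2, h3, h4, h5⟩
    exact ⟨P, hP, P', hP', h1, h2, h3, h4, h5⟩

lemma DomAdjacent.symm {x y : A} (h : DomAdjacent D x y) : DomAdjacent D y x := by
  rw [domAdjacent_iff_pair] at h ⊢
  obtain ⟨P, P', hp⟩ := h
  exact ⟨P', P, hp.symm⟩

lemma DomAdjacent.ne (hcard : 3 ≤ Fintype.card A) {x y : A} (h : DomAdjacent D x y) :
    x ≠ y := by
  rw [domAdjacent_iff_pair] at h
  obtain ⟨P, P', hp⟩ := h
  exact hp.ne hcard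

variable (D)

/-- Canonical choice of adjacency-pair preferences for an ordered pair. -/
noncomputable def PXY (x y : A) : Pref A :=
  if h : DomAdjacent D x y then ((domAdjacent_iff_pair.mp h).choose) else Classical.arbitrary _

noncomputable def PYX (x y : A) : Pref A :=
  if h : DomAdjacent D x y then ((domAdjacent_iff_pair.mp h).choose_spec).choose
  else Classical.arbitrary _

variable {D}

lemma pair_spec {x y : A} (h : DomAdjacent D x y) :
    IsPairP D (PXY D x y) (PYX D x y) x y := by
  rw [PXY, PYX, dif_pos h, dif_pos h]
  exact ((domAdjacent_iff_pair.mp h).choose_spec).choose_spec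

end Pairs

section Chains

variable (D : Set (Pref A))

/-- Adjacency chains inside a set `B`. -/
inductive ChainIn (B : Set A) : A → A → Prop where
  | refl : ∀ a, a ∈ B → ChainIn B a a
  | tail : ∀ a b c, ChainIn B a b → DomAdjacent D b c → c ∈ B → ChainIn B a c

variable {D}

lemma ChainIn.mem_left {B : Set A} {a b : A} (h : ChainIn D B a b) : a ∈ B := by
  induction h with
  | refl ha => exact ha
  | tail b c _ _ _ ih => exact ih

lemma ChainIn.mem_right {B : Set A} {a b : A} (h : ChainIn D B a b) : b ∈ B := by
  cases h with
  | refl ha => exact ha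
  | tail b c _ _ hc => exact hc

lemma ChainIn.mono {B B' : Set A} (hBB : B ⊆ B') {a b : A} (h : ChainIn D B a b) :
    ChainIn D B' a b := by
  induction h with
  | refl ha => exact ChainIn.refl _ (hBB ha)
  | tail b c _ hadj hc ih => exact ChainIn.tail _ b c ih hadj (hBB hc)

lemma ChainIn.cons_left {B : Set A} {a b c : A} (hab : DomAdjacent D a b) (ha : a ∈ B)
    (h : ChainIn D B b c) : ChainIn D B a c := by
  induction h with
  | refl hb => exact ChainIn.tail a a b (ChainIn.refl a ha) hab hb
  | tail d e hbd hde he ih => exact ChainIn.tail a d e ih hde he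

lemma ChainIn.symm {B : Set A} {a b : A} (h : ChainIn D B a b) : ChainIn D B b a := by
  induction h with
  | refl ha => exact ChainIn.refl _ ha
  | tail b c hab hbc hc ih => exact ih.cons_left hbc.symm hc

/-- From a chain leaving `a`, extract a neighbour of `a` in `B`. -/
lemma ChainIn.first_step {B : Set A} {a b : A} (h : ChainIn D B a b) (hne : b ≠ a) :
    ∃ c ∈ B, DomAdjacent D a c := by
  induction h with
  | refl _ => exact absurd rfl hne
  | tail b c hab hbc hc ih =>
    by_cases hba : b = a
    · rw [hba] at hbc; exact ⟨c, hc, hbc⟩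
    · exact ih hba

end Chains

section Regions

variable {D : Set (Pref A)} {f : (Fin 2 → Pref A) → A}

variable (D f)

/-- Voter `i` behaves like a dictator on `B` (two-voter version). -/
def Dct (i : Fin 2) (B : Set A) : Prop :=
  ∀ Pi ∈ D, ∀ Pj ∈ D, peak Pi ∈ B → peak Pj ∈ B → FF f i Pi Pj = peak Pi

/-- Blocked oriented edge: no report of any voter yields `y` against column `PXY x y`. -/
def Blk (i : Fin 2) (x y : A) : Prop := ∀ S ∈ D, FF f i S (PXY D x y) ≠ y

variable {D f}

lemma Dct.mono {i : Fin 2} {B B' : Set A} (h : Dct D f i B) (hsub : B' ⊆ B) :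
    Dct D f i B' := fun Pi h1 Pj h2 hp hq => h Pi h1 Pj h2 (hsub hp) (hsub hq)

/-- A structured dictatorial region. -/
structure Reg (i : Fin 2) (B : Set A) : Prop where
  dict : Dct D f i B
  conn : ∀ a ∈ B, ∀ b ∈ B, ChainIn D B a b
  two : ∃ a ∈ B, ∃ b ∈ B, a ≠ b

lemma Reg.nbr {i : Fin 2} {B : Set A} (hr : Reg (D := D) (f := f) i B) {z : A} (hz : z ∈ B) :
    ∃ a ∈ B, DomAdjacent D z a := by
  obtain ⟨a, ha, b, hb, hab⟩ := hr.two
  by_cases hza : z = a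
  · exact (hr.conn z hz b hb).first_step (by rw [hza]; exact (Ne.symm hab))
  · exact (hr.conn z hz a ha).first_step (Ne.symm hza)

lemma Reg.peaked {i : Fin 2} {B : Set A} (hr : Reg (D := D) (f := f) i B) {z : A} (hz : z ∈ B) :
    ∃ P ∈ D, peak P = z := by
  obtain ⟨a, _, hadj⟩ := hr.nbr hz
  obtain ⟨P, P', hp⟩ := domAdjacent_iff_pair.mp hadj
  exact ⟨P, hp.1, hp.2.2.1⟩

end Regions

-- ================= core lemmas =================

section Core

variable {D : Set (Pref A)} {f : (Fin 2 → Pref A) → A}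

/-- Swap lemma, column version: when the other voter swaps within an adjacency
pair, the outcome is unchanged unless it was the original peak. -/
lemma swap_col (hcard : 3 ≤ Fintype.card A) (hsp : StrategyProof D f) (i : Fin 2)
    {P P' : Pref A} {x y : A} (hpair : IsPairP D P P' x y) {Pi : Pref A} (hPi : Pi ∈ D) :
    FF f i Pi P' = FF f i Pi P ∨ (FF f i Pi P = x ∧ FF f i Pi P' = y) := by
  obtain ⟨hPD, hP'D, hp1, hp2, hp1', hp2', htail⟩ := hpair
  rcases SP_col hsp i hPi hPD hP'D with he | he
  · exact Or.inl he.symm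
  · rcases SP_col hsp i hPi hP'D hPD with he' | he'
    · exact Or.inl he'
    · exact Or.inr (swap_core hcard hp1 hp2 hp1' hp2' htail he he')

/-- Swap lemma, row version. -/
lemma swap_row (hcard : 3 ≤ Fintype.card A) (hsp : StrategyProof D f) (i : Fin 2)
    {P P' : Pref A} {x y : A} (hpair : IsPairP D P P' x y) {Pj : Pref A} (hPj : Pj ∈ D) :
    FF f i P' Pj = FF f i P Pj ∨ (FF f i P Pj = x ∧ FF f i P' Pj = y) := by
  rw [FF_symm i P' Pj, FF_symm i P Pj]
  exact swap_col hcard hsp (oth i) hpair hPj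

/-- Lemma A : outcomes in `B` against a dictatorial row must be the row's peak. -/
lemma LemA (hsp : StrategyProof D f) {i : Fin 2} {B : Set A}
    (hd : Dct D f i B) (hpk : ∀ z ∈ B, ∃ P ∈ D, peak P = z)
    {Qi S : Pref A} (hQi : Qi ∈ D) (hS : S ∈ D) (hw : peak Qi ∈ B)
    (hFB : FF f i Qi S ∈ B) : FF f i Qi S = peak Qi := by
  by_contra hne
  obtain ⟨T, hT, hpT⟩ := hpk _ hFB
  have h1 : FF f i Qi T = peak Qi := hd Qi hQi T hT hw (by rw [hpT]; exact hFB)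
  rcases SP_col hsp i hQi hT hS with he | he
  · exact hne (he.symm.trans h1)
  · rw [h1, ← hpT] at he
    exact not_prefers_peak T _ he

/-- Lemma B (column extension): at profiles where the other voter's peak is the
outside vertex `y`, the dictatorship persists. -/
lemma LB (hcard : 3 ≤ Fintype.card A) (hrule : IsRule D f) (hsp : StrategyProof D f)
    {i : Fin 2} {B : Set A} {x y : A}
    (hr : Reg (D := D) (f := f) i B) (hx : x ∈ B) (hxy : DomAdjacent D x y) (hy : y ∉ B) :
    ∀ z ∈ B, ∀ Qi ∈ D, peak Qi = z → ∀ Qj ∈ D, peak Qj = y → FF f i Qi Qj = z := by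
  obtain ⟨Pxy, Pyx, hpxy⟩ := domAdjacent_iff_pair.mp hxy
  obtain ⟨q1, q2, q3, q4, q5, q6, q7⟩ := hpxy
  have hpxy : IsPairP D Pxy Pyx x y := ⟨q1, q2, q3, q4, q5, q6, q7⟩
  obtain ⟨a, ha, hxa⟩ := hr.nbr hx
  obtain ⟨Pxa, Pax, hpxa⟩ := domAdjacent_iff_pair.mp hxa
  obtain ⟨r1, r2, r3, r4, r5, r6, r7⟩ := hpxa
  have hpxa : IsPairP D Pxa Pax x a := ⟨r1, r2, r3, r4, r5, r6, r7⟩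
  have hxney : x ≠ y := hpxy.ne hcard
  have hxnea : x ≠ a := hpxa.ne hcard
  have haney : a ≠ y := fun h => hy (h ▸ ha)
  -- (c) F(Pax, Pyx) = a
  have hc : FF f i Pax Pyx = a := by
    have hb : FF f i Pax Pxy = a := by
      have := hr.dict Pax r2 Pxy q1 (by rw [r5]; exact ha) (by rw [q3]; exact hx)
      rwa [r5] at this
    rcases swap_col hcard hsp i hpxy r2 with he | ⟨h1, _⟩
    · rw [he, hb]
    · exact absurd (h1.symm.trans hb) hxnea
  -- (d) F(Pxa, Pyx) = x
  have hdx : FF f i Pxa Pyx = x := by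
    have hd0 : FF f i Pxa Pxy = x := by
      have := hr.dict Pxa r1 Pxy q1 (by rw [r3]; exact hx) (by rw [q3]; exact hx)
      rwa [r3] at this
    rcases swap_col hcard hsp i hpxy r1 with he | ⟨_, h2⟩
    · rw [he, hd0]
    · exfalso
      rcases SP_row hsp i r1 q2 r2 with he | he
      · rw [h2, hc] at he; exact haney (he.symm)
      · rw [h2, hc] at he
        have : prefers Pxa a y := by
          rw [← r4]
          exact second_prefers hcard Pxa (by rw [r3]; exact Ne.symm hxney)
            (by rw [r4]; exact Ne.symm haney)
        exact prefers_asymm this he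
  -- (e) all peak-x rows get x against Pyx
  have he' : ∀ Qi ∈ D, peak Qi = x → FF f i Qi Pyx = x := by
    intro Qi hQi hpk
    exact (pull hsp i hQi q2 r1 (by rw [hpk]; exact hdx)).trans hpk
  -- (f) peak-x rows never get y
  have hf : ∀ Qi ∈ D, peak Qi = x → ∀ S ∈ D, FF f i Qi S ≠ y := by
    intro Qi hQi hpk S hS hFy
    rcases SP_col hsp i hQi q2 hS with he | he
    · rw [hFy, he' Qi hQi hpk] at he; exact hxney he
    · rw [hFy, he' Qi hQi hpk] at he
      exact not_prefers_peak Pyx x (by rw [q5]; exact he)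
  -- (g) row Pxy gets x against any peak-y column
  have hg : ∀ Qj ∈ D, peak Qj = y → FF f i Pxy Qj = x := by
    intro Qj hQj hpkQj
    have hyy : FF f i Pyx Qj = y := by
      have := Unan hrule i q2 hQj (by rw [q5, hpkQj])
      rwa [q5] at this
    rcases swap_row hcard hsp i hpxy.symm hQj with he | ⟨_, h2⟩
    · exact absurd (he.trans hyy) (hf Pxy q1 q3 Qj hQj)
    · exact h2
  -- base : peak-x rows
  have base : ∀ Qi ∈ D, peak Qi = x → ∀ Qj ∈ D, peak Qj = y → FF f i Qi Qj = x := by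
    intro Qi hQi hpk Qj hQj hpkQj
    exact (pull hsp i hQi hQj q1 (by rw [hpk]; exact hg Qj hQj hpkQj)).trans hpk
  -- induction along chains in B
  have aux : ∀ z', ChainIn D B x z' →
      ∀ Qi ∈ D, peak Qi = z' → ∀ Qj ∈ D, peak Qj = y → FF f i Qi Qj = z' := by
    intro z' hch
    induction hch with
    | refl _ => exact base
    | tail b c hxb hbc hcB ih =>
      intro Qi hQi hpc Qj hQj hpy
      obtain ⟨Pcb, Pbc, hpcb⟩ := domAdjacent_iff_pair.mp hbc.symm
      obtain ⟨s1, s2, s3, s4, s5, s6, s7⟩ := hpcb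
      have hbB : b ∈ B := hxb.mem_right
      have hbc_ne : b ≠ c := hbc.ne hcard
      have h2 : FF f i Pcb Qj = c := by
        have hz' : FF f i Pbc Qj = b := ih Pbc s2 s5 Qj hQj hpy
        rcases SP_row hsp i s1 hQj s2 with he | he
        · exfalso
          have hmem : FF f i Pcb Qj ∈ B := by rw [he, hz']; exact hbB
          have := LemA hsp hr.dict (fun z hz => hr.peaked hz) s1 hQj
            (by rw [s3]; exact hcB) hmem
          rw [he, hz', s3] at this
          exact hbc_ne this
        · rw [hz'] at he
          have hrank : (Pcb.symm (FF f i Pcb Qj) : ℕ) < 1 := by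
            have hb1 : (Pcb.symm b : ℕ) = 1 := by
              rw [← s4, second_rank Pcb (lt_of_lt_of_le (by norm_num) hcard)]
            rw [prefers_iff, hb1] at he
            exact he
          have h0 : (Pcb.symm (FF f i Pcb Qj) : ℕ) = 0 := by omega
          have := eq_peak_of_rank_zero h0
          rw [s3] at this
          exact this
      exact (pull hsp i hQi hQj s1 (by rw [hpc]; exact h2)).trans hpc
  intro z hz Qi hQi hpz Qj hQj hpy
  exact aux z (hr.conn x hx z hz) Qi hQi hpz Qj hQj hpy

end Core

-- ================= dichotomy, propagation, clashes =================

section Core2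

variable {D : Set (Pref A)} {f : (Fin 2 → Pref A) → A}

/-- Extension dichotomy: either the dictatorial region grows to `y`, or the
oriented edge `(x, y)` is blocked. -/
lemma EXT (hcard : 3 ≤ Fintype.card A) (hrule : IsRule D f) (hsp : StrategyProof D f)
    {i : Fin 2} {B : Set A} {x y : A}
    (hr : Reg (D := D) (f := f) i B) (hx : x ∈ B) (hxy : DomAdjacent D x y) (hy : y ∉ B) :
    Reg (D := D) (f := f) i (insert y B) ∨ Blk D f i x y := by
  have hp := pair_spec hxy
  set Pxy := PXY D x y with hPxydef
  set Pyx := PYX D x y with hPyxdef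
  obtain ⟨q1, q2, q3, q4, q5, q6, q7⟩ := hp
  have hp : IsPairP D Pxy Pyx x y := ⟨q1, q2, q3, q4, q5, q6, q7⟩
  have hxney : x ≠ y := hp.ne hcard
  by_cases hcase : ∃ S ∈ D, FF f i S Pxy = y
  · left
    obtain ⟨Sw, hSw, hFS⟩ := hcase
    have ha : FF f i Pyx Pxy = y := by
      have := pull hsp i q2 q1 hSw (by rw [q5]; exact hFS)
      rwa [q5] at this
    have hrowy : ∀ Qj ∈ D, peak Qj ∈ B → FF f i Pyx Qj = y := by
      intro Qj hQj hqB
      have hb : FF f i Pxy Qj = x := by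
        have := hr.dict Pxy q1 Qj hQj (by rw [q3]; exact hx) hqB
        rwa [q3] at this
      have hxy2 : FF f i Pyx Qj = x ∨ FF f i Pyx Qj = y := by
        rcases swap_row hcard hsp i hp hQj with he | ⟨_, h2⟩
        · exact Or.inl (he.trans hb)
        · exact Or.inr h2
      rcases hxy2 with h | h
      · exfalso
        rcases SP_col hsp i q2 q1 hQj with he | he
        · rw [ha, h] at he; exact hxney he.symm
        · rw [ha, h] at he
          exact not_prefers_peak Pxy y (by rw [q3]; exact he)
      · exact h
    have hdct : Dct D f i (insert y B) := by
      intro Pi hPi Pj hPj hpi hpj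
      rcases Set.mem_insert_iff.mp hpi with hpiy | hpiB
      · rcases Set.mem_insert_iff.mp hpj with hpjy | hpjB
        · exact Unan hrule i hPi hPj (by rw [hpiy, hpjy])
        · have := pull hsp i hPi hPj q2 (by rw [hpiy]; exact hrowy Pj hPj hpjB)
          exact this
      · rcases Set.mem_insert_iff.mp hpj with hpjy | hpjB
        · exact LB hcard hrule hsp hr hx hxy hy (peak Pi) hpiB Pi hPi rfl Pj hPj hpjy
        · exact hr.dict Pi hPi Pj hPj hpiB hpjB
    refine ⟨hdct, ?_, ?_⟩
    · have hchain_to_y : ∀ c ∈ B, ChainIn D (insert y B) c y := by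
        intro c hc
        exact ChainIn.tail _ x y
          ((hr.conn c hc x hx).mono (Set.subset_insert y B)) hxy (Set.mem_insert y B)
      intro a ha' b hb'
      rcases Set.mem_insert_iff.mp ha' with hay | haB
      · rcases Set.mem_insert_iff.mp hb' with hby | hbB
        · rw [hay, hby]; exact ChainIn.refl y (Set.mem_insert y B)
        · rw [hay]; exact (hchain_to_y b hbB).symm
      · rcases Set.mem_insert_iff.mp hb' with hby | hbB
        · rw [hby]; exact hchain_to_y a haB
        · exact (hr.conn a haB b hbB).mono (Set.subset_insert y B)
    · exact ⟨y, Set.mem_insert y B, x, Set.mem_insert_of_mem y hx, Ne.symm hxney⟩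
  · right
    intro S hS hFy
    exact hcase ⟨S, hS, hFy⟩

/-- Propagation of blocks along the adjacency structure. -/
lemma CP (hcard : 3 ≤ Fintype.card A) (hrule : IsRule D f) (hsp : StrategyProof D f)
    {i : Fin 2} {x u u' : A}
    (hxu : DomAdjacent D x u) (huu' : DomAdjacent D u u') (hux : u' ≠ x)
    (hb : Blk D f i x u) : Blk D f i u u' := by
  intro S hS hFS
  have hpxu := pair_spec hxu
  set Pxu := PXY D x u with hPxudef
  set Pux := PYX D x u with hPuxdef
  obtain ⟨q1, q2, q3, q4, q5, q6, q7⟩ := hpxu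
  have hpxu : IsPairP D Pxu Pux x u := ⟨q1, q2, q3, q4, q5, q6, q7⟩
  have hpuv := pair_spec huu'
  set Puv := PXY D u u' with hPuvdef
  set Pvu := PYX D u u' with hPvudef
  obtain ⟨r1, r2, r3, r4, r5, r6, r7⟩ := hpuv
  have hpuv : IsPairP D Puv Pvu u u' := ⟨r1, r2, r3, r4, r5, r6, r7⟩
  have hne_xu : x ≠ u := hpxu.ne hcard
  have hne_uu' : u ≠ u' := hpuv.ne hcard
  -- step 1
  have h1 : FF f i Pvu Puv = u' := by
    have := pull hsp i r2 r1 hS (by rw [r5]; exact hFS)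
    rwa [r5] at this
  -- steps 2-3 : F(Pvu, Pux) = u'
  have h3 : FF f i Pvu Pux = u' := by
    have hne : FF f i Pvu Pux ≠ u := by
      intro hq
      rcases SP_col hsp i r2 r1 q2 with he | he
      · rw [h1, hq] at he; exact hne_uu' he.symm
      · rw [h1, hq] at he
        exact not_prefers_peak Puv u' (by rw [r3]; exact he)
    have huu : FF f i Pux Pux = u := by
      have := Unan hrule i q2 q2 rfl
      rwa [q5] at this
    rcases SP_row hsp i r2 q2 q2 with he | he
    · exact absurd (he.trans huu) hne
    · rw [huu] at he
      have hrank : (Pvu.symm (FF f i Pvu Pux) : ℕ) < 1 := by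
        have hu1 : (Pvu.symm u : ℕ) = 1 := by
          rw [← r6, second_rank Pvu (lt_of_lt_of_le (by norm_num) hcard)]
        rw [prefers_iff, hu1] at he
        exact he
      have h0 : (Pvu.symm (FF f i Pvu Pux) : ℕ) = 0 := by omega
      have := eq_peak_of_rank_zero h0
      rw [r5] at this
      exact this
  -- step 4 : F(Pvu, Pxu) = u'
  have h4 : FF f i Pvu Pxu = u' := by
    rcases swap_col hcard hsp i hpxu.symm r2 with he | ⟨hq, _⟩
    · exact he.trans h3
    · exact absurd (h3.symm.trans hq) (Ne.symm hne_uu')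
  -- step 5 : F(Puv, Pxu) = x
  have h5 : FF f i Puv Pxu = x := by
    have h5a : FF f i Puv Pux = u := by
      have := Unan hrule i r1 q2 (by rw [r3, q5])
      rwa [r3] at this
    rcases swap_col hcard hsp i hpxu.symm r1 with he | ⟨_, h2⟩
    · exact absurd (he.trans h5a) (hb Puv r1)
    · exact h2
  -- step 6 : contradiction
  rcases SP_row hsp i r1 q1 r2 with he | he
  · rw [h5, h4] at he; exact hux he.symm
  · rw [h5, h4] at he
    have : prefers Puv u' x := by
      rw [← r4]
      exact second_prefers hcard Puv (by rw [r3]; exact hne_xu)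
        (by rw [r4]; exact Ne.symm hux)
    exact prefers_asymm this he

/-- Two opposite blocks on the same edge are contradictory. -/
lemma CLASH (hcard : 3 ≤ Fintype.card A) (hrule : IsRule D f) (hsp : StrategyProof D f)
    {i : Fin 2} {s t : A} (hst : DomAdjacent D s t)
    (h1 : Blk D f i s t) (h2 : Blk D f (oth i) t s) : False := by
  have hp := pair_spec hst
  set Pst := PXY D s t with hPstdef
  set Pts := PYX D s t with hPtsdef
  obtain ⟨q1, q2, q3, q4, q5, q6, q7⟩ := hp
  have hp : IsPairP D Pst Pts s t := ⟨q1, q2, q3, q4, q5, q6, q7⟩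
  have hpR := pair_spec hst.symm
  set Rts := PXY D t s with hRtsdef
  have hRD : Rts ∈ D := hpR.1
  have hRpk : peak Rts = t := hpR.2.2.1
  have h2' : ∀ S ∈ D, FF f i Rts S ≠ s := by
    intro S hS hq
    exact h2 S hS (by rw [← FF_symm]; exact hq)
  have hτ : FF f i Rts Pts = t := by
    have := Unan hrule i hRD q2 (by rw [hRpk, q5])
    rwa [hRpk] at this
  rcases swap_col hcard hsp i hp.symm hRD with he | ⟨_, he⟩
  · exact h1 Rts hRD (he.trans hτ)
  · exact h2' Pst q1 he

/-- Adjacent overlap of an `i`-region and an `(oth i)`-dictatorship is contradictory. -/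
lemma TOUCH (hcard : 3 ≤ Fintype.card A) (hrule : IsRule D f) (hsp : StrategyProof D f)
    {i : Fin 2} {B C : Set A} {s t : A}
    (hr : Reg (D := D) (f := f) i B) (hdC : Dct D f (oth i) C)
    (hsB : s ∈ B) (hsC : s ∈ C) (htC : t ∈ C) (htB : t ∉ B)
    (hadj : DomAdjacent D s t) : False := by
  obtain ⟨T, T', hpT⟩ := domAdjacent_iff_pair.mp hadj
  obtain ⟨r1, r2, r3, r4, r5, r6, r7⟩ := hpT
  obtain ⟨S, hS, hpS⟩ := hr.peaked hsB
  have h1 : FF f i S T' = s :=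
    LB hcard hrule hsp hr hsB hadj htB s hsB S hS hpS T' r2 r5
  have h2 : FF f i S T' = t := by
    have := hdC T' r2 S hS (by rw [r5]; exact htC) (by rw [hpS]; exact hsC)
    rw [r5] at this
    rw [FF_symm]
    exact this
  exact (hadj.ne hcard) (h1.symm.trans h2)

/-- Two-point overlap of dictatorial regions for different voters is contradictory. -/
lemma T1 {i : Fin 2} {B C : Set A} {s t : A}
    (hdB : Dct D f i B) (hdC : Dct D f (oth i) C)
    (hsB : s ∈ B) (hsC : s ∈ C) (htB : t ∈ B) (htC : t ∈ C) (hne : s ≠ t)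
    {S T : Pref A} (hS : S ∈ D) (hpS : peak S = s) (hT : T ∈ D) (hpT : peak T = t) :
    False := by
  have h1 : FF f i S T = s := by
    have := hdB S hS T hT (by rw [hpS]; exact hsB) (by rw [hpT]; exact htB)
    rwa [hpS] at this
  have h2 : FF f i S T = t := by
    have := hdC T hT S hS (by rw [hpT]; exact htC) (by rw [hpS]; exact hsC)
    rw [hpT] at this
    rw [FF_symm]
    exact this
  exact hne (h1.symm.trans h2)

end Core2

-- ================= growth lemmas =================

section Growth

variable {D : Set (Pref A)} {f : (Fin 2 → Pref A) → A}

/-- Growth along a prescribed adjacency sequence. -/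
lemma grow_path (hcard : 3 ≤ Fintype.card A) (hrule : IsRule D f) (hsp : StrategyProof D f)
    {i : Fin 2} {B₀ : Set A} (hr0 : Reg (D := D) (f := f) i B₀)
    (y : ℕ → A) (n : ℕ) (hadj : ∀ k, k + 1 < n → DomAdjacent D (y k) (y (k + 1)))
    (hy0 : y 0 ∈ B₀) :
    ∀ k, k < n →
      (∃ B', Reg (D := D) (f := f) i B' ∧ B₀ ⊆ B' ∧ ∀ l ≤ k, y l ∈ B') ∨
      (∃ l B', l + 1 < n ∧ Reg (D := D) (f := f) i B' ∧ B₀ ⊆ B' ∧ (∀ m ≤ l, y m ∈ B') ∧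
        y (l + 1) ∉ B' ∧ Blk D f i (y l) (y (l + 1))) := by
  intro k
  induction k with
  | zero =>
    intro _
    left
    refine ⟨B₀, hr0, subset_rfl, ?_⟩
    intro l hl
    rw [Nat.le_zero.mp hl]
    exact hy0
  | succ k ih =>
    intro hk
    rcases ih (Nat.lt_of_succ_lt hk) with ⟨B', hB', hsub, hmem⟩ | hcoll
    · by_cases hy : y (k + 1) ∈ B'
      · left
        refine ⟨B', hB', hsub, ?_⟩
        intro l hl
        rcases Nat.lt_or_ge l (k + 1) with h | h
        · exact hmem l (Nat.lt_succ_iff.mp h)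
        · have : l = k + 1 := le_antisymm hl h
          rw [this]; exact hy
      · rcases EXT hcard hrule hsp hB' (hmem k le_rfl) (hadj k hk) hy with hreg | hblk
        · left
          refine ⟨insert (y (k + 1)) B', hreg, hsub.trans (Set.subset_insert _ _), ?_⟩
          intro l hl
          rcases Nat.lt_or_ge l (k + 1) with h | h
          · exact Set.mem_insert_of_mem _ (hmem l (Nat.lt_succ_iff.mp h))
          · have : l = k + 1 := le_antisymm hl h
            rw [this]; exact Set.mem_insert _ _
        · right
          exact ⟨k, B', hk, hB', hsub, hmem, hy, hblk⟩
    · right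
      exact hcoll

/-- Extract a crossing edge from a chain that leaves `B`. -/
lemma chain_cross {B T : Set A} {a b : A} (h : ChainIn D T a b) :
    a ∈ B → b ∉ B → ∃ s, s ∈ B ∧ s ∈ T ∧ ∃ c, c ∈ T ∧ c ∉ B ∧ DomAdjacent D s c := by
  induction h with
  | refl _ => exact fun ha hb => absurd ha hb
  | tail b c hab hbc hcT ih =>
    intro ha hb
    by_cases hbB : b ∈ B
    · exact ⟨b, hbB, hab.mem_right, c, hcT, hb, hbc⟩
    · exact ih ha hbB

/-- Growth into a chain-connected target region. -/
lemma grow_region (hcard : 3 ≤ Fintype.card A) (hrule : IsRule D f) (hsp : StrategyProof D f)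
    {i : Fin 2} {T : Set A}
    (hTconn : ∀ a ∈ T, ∀ b ∈ T, ChainIn D T a b) :
    ∀ (N : ℕ) (B₀ : Set A), Reg (D := D) (f := f) i B₀ → (T \ B₀).ncard ≤ N →
      (∃ t0, t0 ∈ B₀ ∧ t0 ∈ T) →
      (∃ B', Reg (D := D) (f := f) i B' ∧ B₀ ⊆ B' ∧ T ⊆ B') ∨
      (∃ B' s b, Reg (D := D) (f := f) i B' ∧ B₀ ⊆ B' ∧ s ∈ B' ∧ s ∈ T ∧ b ∈ T ∧ b ∉ B' ∧
        DomAdjacent D s b ∧ Blk D f i s b) := by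
  intro N
  induction N with
  | zero =>
    intro B₀ hr0 hcardT _
    left
    refine ⟨B₀, hr0, subset_rfl, ?_⟩
    intro z hz
    by_contra hzB
    have hmem : z ∈ T \ B₀ := ⟨hz, hzB⟩
    have : (T \ B₀).ncard ≠ 0 := by
      intro h0
      have := (Set.ncard_eq_zero (Set.toFinite _)).mp h0
      rw [this] at hmem
      exact hmem
    omega
  | succ N ihN =>
    intro B₀ hr0 hcardT ht0
    by_cases hTB : T ⊆ B₀
    · exact Or.inl ⟨B₀, hr0, subset_rfl, hTB⟩
    · obtain ⟨t0, ht0B, ht0T⟩ := ht0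
      obtain ⟨b₀, hb₀T, hb₀B⟩ := Set.not_subset.mp hTB
      obtain ⟨s, hsB, hsT, c, hcT, hcB, hsc⟩ :=
        chain_cross (hTconn t0 ht0T b₀ hb₀T) ht0B hb₀B
      rcases EXT hcard hrule hsp hr0 hsB hsc hcB with hreg | hblk
      · have hdec : (T \ insert c B₀).ncard ≤ N := by
          have hss : T \ insert c B₀ ⊂ T \ B₀ := by
            constructor
            · intro z hz
              exact ⟨hz.1, fun hzB => hz.2 (Set.mem_insert_of_mem _ hzB)⟩
            · intro hsup
              have : c ∈ T \ insert c B₀ := hsup ⟨hcT, hcB⟩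
              exact this.2 (Set.mem_insert _ _)
          have := Set.ncard_lt_ncard hss (Set.toFinite _)
          omega
        rcases ihN (insert c B₀) hreg hdec ⟨t0, Set.mem_insert_of_mem _ ht0B, ht0T⟩ with
          ⟨B', h1, h2, h3⟩ | ⟨B', s', b', h1, h2, h3⟩
        · exact Or.inl ⟨B', h1, (Set.subset_insert _ _).trans h2, h3⟩
        · exact Or.inr ⟨B', s', b', h1, (Set.subset_insert _ _).trans h2, h3⟩
      · exact Or.inr ⟨B₀, s, c, hr0, subset_rfl, hsB, hsT, hcT, hcB, hsc, hblk⟩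

/-- A block pointing into a dictatorial region is contradictory. -/
lemma blk_into_region (hcard : 3 ≤ Fintype.card A) (hrule : IsRule D f)
    (hsp : StrategyProof D f) {i : Fin 2} {R : Set A} {s t : A}
    (hreg : Reg (D := D) (f := f) i R) (hadj : DomAdjacent D s t) (ht : t ∈ R)
    (hblk : Blk D f i s t) : False := by
  have hp := pair_spec hadj
  obtain ⟨q1, q2, q3, q4, q5, q6, q7⟩ := hp
  by_cases hs : s ∈ R
  · have := hreg.dict (PYX D s t) q2 (PXY D s t) q1 (by rw [q5]; exact ht) (by rw [q3]; exact hs)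
    rw [q5] at this
    exact hblk (PYX D s t) q2 this
  · have := LB hcard hrule hsp hreg ht hadj.symm hs t ht (PYX D s t) q2 q5 (PXY D s t) q1 q3
    exact hblk (PYX D s t) q2 this

end Growth

-- ================= conversions and final assembly =================

section Final

variable {D : Set (Pref A)} {f : (Fin 2 → Pref A) → A}

lemma adjGraph_toDom {a b : A} (h : (adjGraph D).Adj a b) : DomAdjacent D a b := by
  rw [adjGraph, SimpleGraph.fromRel_adj] at h
  rcases h.2 with h' | h'
  · exact h'
  · exact h'.symm

lemma conn_chain {S : Set A} (hconn : ((adjGraph D).induce S).Connected) :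
    ∀ a ∈ S, ∀ b ∈ S, ChainIn D S a b := by
  have aux : ∀ (u v : ↥S) (w : ((adjGraph D).induce S).Walk u v), ChainIn D S u.val v.val := by
    intro u v w
    induction w with
    | nil => exact ChainIn.refl _ (Subtype.coe_prop _)
    | cons h p ih => exact ChainIn.cons_left (adjGraph_toDom h) (Subtype.coe_prop _) ih
  intro a ha b hb
  obtain ⟨w⟩ := hconn.preconnected ⟨a, ha⟩ ⟨b, hb⟩
  exact aux _ _ w

lemma dct_of_dictatorOn {B : Set A}
    (hd : DictatorOn D f B) : ∃ i, Dct D f i B := by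
  obtain ⟨i, h⟩ := hd
  refine ⟨i, fun Pi hPi Pj hPj hpi hpj => ?_⟩
  have hpk : ∀ j', peak (prof2 i Pi Pj j') ∈ B := by
    intro j'
    by_cases hj : j' = i
    · subst hj; simpa using hpi
    · rw [eq_oth_of_ne hj, prof2_other]; exact hpj
  have := h (prof2 i Pi Pj) (InDom_prof2 hPi hPj) hpk
  rw [prof2_self] at this
  exact this

lemma dictatorOn_of_dct {i : Fin 2} {B : Set A} (hd : Dct D f i B) : DictatorOn D f B := by
  refine ⟨i, fun P hP hpk => ?_⟩
  set Pi := P i with hPi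
  set Pj := P (oth i) with hPj
  have hPeq : P = prof2 i Pi Pj := by
    funext j'
    by_cases hj : j' = i
    · subst hj; simp [hPi]
    · rw [eq_oth_of_ne hj, prof2_other]
  rw [hPeq]
  exact hd Pi (hP i) Pj (hP (oth i)) (hpk i) (hpk (oth i))

end Final

theorem aux_union (D : Set (Pref A)) (hD : D.Nonempty)
    (hcard : 3 ≤ Fintype.card A)
    (f : (Fin 2 → Pref A) → A) (hrule : IsRule D f) (hsp : StrategyProof D f)
    (Abar Ahat : Set A) (h1 : 1 < Abar.ncard) (h2 : 1 < Ahat.ncard)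
    (hc1 : ((adjGraph D).induce Abar).Connected)
    (hc2 : ((adjGraph D).induce Ahat).Connected)
    (v : ℕ) (hv : 1 ≤ v) (x : Fin v → A) (hpath : IsPathIn (adjGraph D) x)
    (hx0 : x ⟨0, Nat.lt_of_lt_of_le Nat.zero_lt_one hv⟩ ∈ Abar)
    (hxv : x ⟨v - 1, Nat.sub_one_lt_of_le (Nat.lt_of_lt_of_le Nat.zero_lt_one hv) le_rfl⟩ ∈ Ahat)
    (hd1 : DictatorOn D f Abar) (hd2 : DictatorOn D f Ahat) :
    DictatorOn D f (Abar ∪ Set.range x ∪ Ahat) := by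
  classical
  obtain ⟨i, hdi⟩ := dct_of_dictatorOn hd1
  obtain ⟨j, hdj⟩ := dct_of_dictatorOn hd2
  -- the path as an ℕ-indexed sequence
  set w : ℕ → A := fun k => x ⟨min k (v - 1), by omega⟩ with hwdef
  have hwk : ∀ k (hk : k < v), w k = x ⟨k, hk⟩ := by
    intro k hk
    apply congrArg x
    apply Fin.ext
    show min k (v - 1) = k
    omega
  have hwadj : ∀ k, k + 1 < v → DomAdjacent D (w k) (w (k + 1)) := by
    intro k hk
    rw [hwk k (by omega), hwk (k + 1) hk]
    exact adjGraph_toDom (hpath.2 k hk)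
  have hwinj : ∀ k l, k < v → l < v → w k = w l → k = l := by
    intro k l hk hl he
    rw [hwk k hk, hwk l hl] at he
    have := hpath.1 he
    exact congrArg Fin.val this
  have hw0 : w 0 ∈ Abar := by rw [hwk 0 (by omega)]; exact hx0
  have hwv : w (v - 1) ∈ Ahat := by rw [hwk (v - 1) (by omega)]; exact hxv
  have hwrange : ∀ k (hk : k < v), w k ∈ Set.range x := by
    intro k hk; rw [hwk k hk]; exact ⟨_, rfl⟩
  -- two-element facts
  have two1 : ∃ a ∈ Abar, ∃ b ∈ Abar, a ≠ b := by
    rw [Set.one_lt_ncard_iff (Abar.toFinite)] at h1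
    obtain ⟨a, b, ha, hb, hab⟩ := h1
    exact ⟨a, ha, b, hb, hab⟩
  have two2 : ∃ a ∈ Ahat, ∃ b ∈ Ahat, a ≠ b := by
    rw [Set.one_lt_ncard_iff (Ahat.toFinite)] at h2
    obtain ⟨a, b, ha, hb, hab⟩ := h2
    exact ⟨a, ha, b, hb, hab⟩
  have hRegA : Reg (D := D) (f := f) i Abar := ⟨hdi, conn_chain hc1, two1⟩
  -- block propagation along the path
  have prop : ∀ (i' : Fin 2) l, l + 1 < v → Blk D f i' (w l) (w (l + 1)) →
      ∀ k, l ≤ k → k + 1 < v → Blk D f i' (w k) (w (k + 1)) := by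
    intro i' l hl hblk k hlk
    induction k, hlk using Nat.le_induction with
    | base => exact fun _ => hblk
    | succ k hk ih =>
      intro hk2
      have hk1 : k + 1 < v := by omega
      refine CP hcard hrule hsp (hwadj k hk1) (hwadj (k + 1) hk2) ?_ (ih hk1)
      intro he
      have := hwinj (k + 2) k (by omega) (by omega) he
      omega
  -- suffices to get a Dct on the union
  suffices hS : ∃ i', Dct D f i' (Abar ∪ Set.range x ∪ Ahat) by
    obtain ⟨i', hi'⟩ := hS
    exact dictatorOn_of_dct hi'
  by_cases hji : j = i
  · -- same dictator on both ends
    subst hji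
    have hRegH : Reg (D := D) (f := f) j Ahat := ⟨hdj, conn_chain hc2, two2⟩
    rcases grow_path hcard hrule hsp hRegA w v hwadj hw0 (v - 1) (by omega) with
      ⟨B1, hB1, hsubA, hmem⟩ | ⟨l, B1, hl, hB1, hsubA, hmem, hnot, hblk⟩
    · rcases grow_region hcard hrule hsp (conn_chain hc2) ((Ahat \ B1).ncard) B1 hB1 le_rfl
        ⟨w (v - 1), hmem (v - 1) le_rfl, hwv⟩ with
        ⟨B2, hB2, hsub2, hsubT⟩ | ⟨B2, s, b, hB2, hsub2, hsB2, hsT, hbT, hbB2, hadj, hblk⟩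
      · refine ⟨j, hB2.dict.mono ?_⟩
        intro z hz
        rcases hz with (hz | hz) | hz
        · exact hsub2 (hsubA hz)
        · obtain ⟨m, rfl⟩ := hz
          have hmv : (m : ℕ) < v := m.isLt
          have hmm : w m.val ∈ B1 := hmem m.val (by omega)
          rw [hwk m.val hmv] at hmm
          exact hsub2 hmm
        · exact hsubT hz
      · exact (blk_into_region hcard hrule hsp hRegH hadj hbT hblk).elim
    · -- collapse along the path: contradiction with the far region
      have hv2 : v - 2 + 1 = v - 1 := by omega
      have hblk' : Blk D f j (w (v - 2)) (w (v - 1)) := by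
        have := prop j l hl hblk (v - 2) (by omega) (by omega)
        rwa [hv2] at this
      have hadj2 : DomAdjacent D (w (v - 2)) (w (v - 1)) := by
        have := hwadj (v - 2) (by omega)
        rwa [hv2] at this
      exact (blk_into_region hcard hrule hsp hRegH hadj2 hwv hblk').elim
  · -- different dictators : derive a contradiction
    exfalso
    have hj' : j = oth i := eq_oth_of_ne hji
    rw [hj'] at hdj
    have hRegH : Reg (D := D) (f := f) (oth i) Ahat := ⟨hdj, conn_chain hc2, two2⟩
    rcases grow_path hcard hrule hsp hRegA w v hwadj hw0 (v - 1) (by omega) with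
      ⟨B1, hB1, hsubA, hmem⟩ | ⟨l, B1, hl, hB1, hsubA, hmem, hnot, hblk⟩
    · -- i-side reaches the far end : clash with the (oth i)-dictatorship on Ahat
      rcases grow_region hcard hrule hsp (conn_chain hc2) ((Ahat \ B1).ncard) B1 hB1 le_rfl
        ⟨w (v - 1), hmem (v - 1) le_rfl, hwv⟩ with
        ⟨B2, hB2, hsub2, hsubT⟩ | ⟨B2, s, b, hB2, hsub2, hsB2, hsT, hbT, hbB2, hadj, hblk⟩
      · obtain ⟨s, hsA, t, htA, hst⟩ := two2
        obtain ⟨S, hS, hpS⟩ := hB2.peaked (hsubT hsA)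
        obtain ⟨T, hT, hpT⟩ := hB2.peaked (hsubT htA)
        exact T1 hB2.dict hdj (hsubT hsA) hsA (hsubT htA) htA hst hS hpS hT hpT
      · exact TOUCH hcard hrule hsp hB2 hdj hsB2 hsT hbT hbB2 hadj
    · -- i-side collapses at (w l, w (l+1)) : run the (oth i) side backwards
      set y' : ℕ → A := fun k => w (v - 1 - k) with hy'def
      have hy'adj : ∀ k, k + 1 < v → DomAdjacent D (y' k) (y' (k + 1)) := by
        intro k hk
        have h1 : v - 1 - (k + 1) = v - 2 - k := by omega
        have h2 : (v - 2 - k) + 1 = v - 1 - k := by omega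
        have := (hwadj (v - 2 - k) (by omega)).symm
        show DomAdjacent D (w (v - 1 - k)) (w (v - 1 - (k + 1)))
        rw [h1, ← h2]
        exact this
      have hy'0 : y' 0 ∈ Ahat := by
        show w (v - 1 - 0) ∈ Ahat
        simpa using hwv
      rcases grow_path hcard hrule hsp hRegH y' v hy'adj hy'0 (v - 1) (by omega) with
        ⟨C1, hC1, hsubH, hmemC⟩ | ⟨lh, C1, hlh, hC1, hsubH, hmemC, hnotC, hblkC⟩
      · -- (oth i)-side reaches across : overlap contradictions
        have hwmemC : ∀ m, m < v → w m ∈ C1 := by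
          intro m hm
          have he : w m = y' (v - 1 - m) := by
            show w m = w (v - 1 - (v - 1 - m)); congr 1; omega
          rw [he]
          exact hmemC (v - 1 - m) (by omega)
        by_cases hl0 : l = 0
        · subst hl0
          exact TOUCH hcard hrule hsp hB1 hC1.dict (hmem 0 le_rfl) (hwmemC 0 (by omega))
            (hwmemC 1 (by omega)) hnot (hwadj 0 (by omega))
        · obtain ⟨S, hS, hpS⟩ := hB1.peaked (hmem 0 (by omega))
          obtain ⟨T, hT, hpT⟩ := hB1.peaked (hmem 1 (by omega))
          refine T1 hB1.dict hC1.dict (hmem 0 (by omega)) (hwmemC 0 (by omega))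
            (hmem 1 (by omega)) (hwmemC 1 (by omega)) ?_ hS hpS hT hpT
          intro he
          have := hwinj 0 1 (by omega) (by omega) he
          omega
      · -- both sides collapse
        set l' := v - 2 - lh with hl'def
        have hyl : y' lh = w (l' + 1) := by
          show w (v - 1 - lh) = w (l' + 1); congr 1; omega
        have hyl1 : y' (lh + 1) = w l' := by
          show w (v - 1 - (lh + 1)) = w l'; congr 1; omega
        have hblkC' : Blk D f (oth i) (w (l' + 1)) (w l') := by rwa [hyl, hyl1] at hblkC
        have hCm : ∀ m, l' + 1 ≤ m → m < v → w m ∈ C1 := by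
          intro m hm1 hm2
          have he : w m = y' (v - 1 - m) := by
            show w m = w (v - 1 - (v - 1 - m)); congr 1; omega
          rw [he]
          exact hmemC (v - 1 - m) (by omega)
        rcases lt_trichotomy l (l' + 1) with hc | hc | hc
        · -- l ≤ l' : propagate and clash
          have hble : Blk D f i (w l') (w (l' + 1)) :=
            prop i l hl hblk l' (by omega) (by omega)
          exact CLASH hcard hrule hsp (hwadj l' (by omega)) hble hblkC'
        · -- l = l' + 1 : touching regions
          exact TOUCH hcard hrule hsp hB1 hC1.dict (hmem l le_rfl)
            (hCm l (by omega) (by omega)) (hCm (l + 1) (by omega) hl) hnot (hwadj l hl)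
        · -- l ≥ l' + 2 : two-point overlap
          obtain ⟨S, hS, hpS⟩ := hB1.peaked (hmem (l' + 1) (by omega))
          obtain ⟨T, hT, hpT⟩ := hB1.peaked (hmem (l' + 2) (by omega))
          refine T1 hB1.dict hC1.dict (hmem (l' + 1) (by omega)) (hCm (l' + 1) le_rfl (by omega))
            (hmem (l' + 2) (by omega)) (hCm (l' + 2) (by omega) (by omega)) ?_ hS hpS hT hpT
          intro he
          have := hwinj (l' + 1) (l' + 2) (by omega) (by omega) he
          omega


/-- Lemma 2: two dictatorial regions connected by a path merge
into a single dictatorial region. -/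
theorem stmt14_union (D : Set (Pref A)) (hD : D.Nonempty)
    (hcard : 3 ≤ Fintype.card A) (hpc : PathConnectedDom D)
    (f : (Fin 2 → Pref A) → A) (hrule : IsRule D f) (hsp : StrategyProof D f)
    (Abar Ahat : Set A) (h1 : 1 < Abar.ncard) (h2 : 1 < Ahat.ncard)
    (hc1 : ((adjGraph D).induce Abar).Connected)
    (hc2 : ((adjGraph D).induce Ahat).Connected)
    (v : ℕ) (hv : 1 ≤ v) (x : Fin v → A) (hpath : IsPathIn (adjGraph D) x)
    (hx0 : x ⟨0, by omega⟩ ∈ Abar) (hxv : x ⟨v - 1, by omega⟩ ∈ Ahat)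
    (hd1 : DictatorOn D f Abar) (hd2 : DictatorOn D f Ahat) :
    DictatorOn D f (Abar ∪ Set.range x ∪ Ahat) := by
  exact aux_union D hD hcard f hrule hsp Abar Ahat h1 h2 hc1 hc2 v hv x hpath hx0 hxv hd1 hd2
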